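/- Let d ≥ 1, let B and D be real d×d matrices, let λ > 0 be such that ⟪v, (B + Bᵀ) v⟫ ≤ -λ·‖v‖² for all v ∈ ℝ^d, let p and P be real symmetric positive semidefinite d×d matrices, let Q be a real symmetric d×d matrix, and let ρ ≥ 0. Then ⟨Q, (B - (ρ/2)(p + P))·Q + Q·(B - (ρ/2)(p + P))ᵀ + D·P + P·Dᵀ⟩ ≤ -λ·‖Q‖_F² + 2·‖D‖·tr(P)·‖Q‖_F, where ⟨·,·⟩ and ‖·‖_F are the Frobenius inner product and norm and ‖D‖ is the ℓ²-operator norm of D. -/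

import Mathlib

open Matrix
open scoped Matrix.Norms.L2Operator

namespace Stmt13Aux

variable {d : ℕ}

noncomputable def fr2 (A : Matrix (Fin d) (Fin d) ℝ) : ℝ := ∑ i, ∑ j, (A i j)^2

lemma fr2_nonneg (A : Matrix (Fin d) (Fin d) ℝ) : 0 ≤ fr2 A := by
  unfold fr2; positivity

lemma fr2_eq_trace (A : Matrix (Fin d) (Fin d) ℝ) : fr2 A = (Aᵀ * A).trace := by
  simp [fr2, Matrix.trace, Matrix.mul_apply, Matrix.diag, sq]
  exact Finset.sum_comm

lemma fr2_mul_le_op (A S : Matrix (Fin d) (Fin d) ℝ) :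
    fr2 (A * S) ≤ ‖A‖^2 * fr2 S := by
  have h : ∀ j, ∑ i, ((A * S) i j)^2 ≤ ‖A‖^2 * ∑ i, (S i j)^2 := by
    intro j
    set v : EuclideanSpace ℝ (Fin d) := (EuclideanSpace.equiv (Fin d) ℝ).symm (fun i => S i j)
      with hvdef
    have hv := A.l2_opNorm_mulVec v
    have hsq : ‖(EuclideanSpace.equiv (Fin d) ℝ).symm (A *ᵥ v)‖^2 ≤ (‖A‖ * ‖v‖)^2 :=
      pow_le_pow_left₀ (norm_nonneg _) hv 2
    have h1 : ‖(EuclideanSpace.equiv (Fin d) ℝ).symm (A *ᵥ v)‖^2 = ∑ i, ((A * S) i j)^2 := by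
      rw [EuclideanSpace.norm_eq, Real.sq_sqrt (by positivity)]
      refine Finset.sum_congr rfl fun i _ => ?_
      simp [hvdef, Matrix.mul_apply, Matrix.mulVec, dotProduct, sq_abs,
        EuclideanSpace.equiv]
    have h2 : ‖v‖^2 = ∑ i, (S i j)^2 := by
      rw [EuclideanSpace.norm_eq, Real.sq_sqrt (by positivity)]
      refine Finset.sum_congr rfl fun i _ => ?_
      simp [hvdef, sq_abs, EuclideanSpace.equiv]
    rw [h1] at hsq
    calc ∑ i, ((A * S) i j)^2 ≤ (‖A‖ * ‖v‖)^2 := hsq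
      _ = ‖A‖^2 * ∑ i, (S i j)^2 := by rw [mul_pow, h2]
  calc fr2 (A * S) = ∑ j, ∑ i, ((A * S) i j)^2 := Finset.sum_comm
    _ ≤ ∑ j, ‖A‖^2 * ∑ i, (S i j)^2 := Finset.sum_le_sum fun j _ => h j
    _ = ‖A‖^2 * fr2 S := by
        rw [← Finset.mul_sum]; congr 1; exact Finset.sum_comm

lemma fr2_mul_le (A B : Matrix (Fin d) (Fin d) ℝ) :
    fr2 (A * B) ≤ fr2 A * fr2 B := by
  have h : ∀ i j, ((A * B) i j)^2 ≤ (∑ k, (A i k)^2) * (∑ k, (B k j)^2) := by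
    intro i j
    simpa [Matrix.mul_apply] using
      Finset.sum_mul_sq_le_sq_mul_sq Finset.univ (fun k => A i k) (fun k => B k j)
  calc fr2 (A * B) ≤ ∑ i, ∑ j, (∑ k, (A i k)^2) * (∑ k, (B k j)^2) := by
        apply Finset.sum_le_sum; intro i _; exact Finset.sum_le_sum fun j _ => h i j
    _ = fr2 A * fr2 B := by
        rw [← Finset.sum_mul_sum]
        unfold fr2
        congr 1
        exact Finset.sum_comm

lemma trace_quad (A0 Q : Matrix (Fin d) (Fin d) ℝ) :
    (Qᵀ * (A0 * Q)).trace = ∑ j, (fun i => Q i j) ⬝ᵥ (A0 *ᵥ fun i => Q i j) := by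
  simp [Matrix.trace, Matrix.diag, Matrix.mul_apply, dotProduct, Matrix.mulVec, Finset.mul_sum]

lemma trace_col (Q : Matrix (Fin d) (Fin d) ℝ) :
    (Qᵀ * Q).trace = ∑ j, (fun i => Q i j) ⬝ᵥ (fun i => Q i j) := by
  simp [Matrix.trace, Matrix.diag, Matrix.mul_apply, dotProduct]

lemma psd_transpose {M : Matrix (Fin d) (Fin d) ℝ} (hM : M.PosSemidef) : Mᵀ = M := by
  have := hM.1
  rwa [Matrix.IsHermitian, Matrix.conjTranspose_eq_transpose_of_trivial] at this

end Stmt13Aux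

open Stmt13Aux

/-- Drift estimate for the sample covariance error from the proof of Lemma 5.3:
`⟨Q, (B - (ρ/2)(p+P)) Q + Q (B - (ρ/2)(p+P))ᵀ + D P + P Dᵀ⟩
  ≤ -λ ‖Q‖_F² + 2 ‖D‖ tr(P) ‖Q‖_F`, where `⟨·,·⟩`, `‖·‖_F` are the Frobenius
inner product and norm and `‖D‖` is the ℓ²-operator norm. -/
theorem stmt_13 (d : ℕ) (hd : 1 ≤ d) (B D : Matrix (Fin d) (Fin d) ℝ)
    (lam : ℝ) (hlam : 0 < lam)
    (hB : ∀ v : Fin d → ℝ, v ⬝ᵥ ((B + Bᵀ) *ᵥ v) ≤ -lam * (v ⬝ᵥ v))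
    (p P : Matrix (Fin d) (Fin d) ℝ) (hp : p.PosSemidef) (hP : P.PosSemidef)
    (Q : Matrix (Fin d) (Fin d) ℝ) (hQ : Q.IsSymm) (ρ : ℝ) (hρ : 0 ≤ ρ) :
    (Qᵀ * ((B - (ρ / 2) • (p + P)) * Q + Q * (B - (ρ / 2) • (p + P))ᵀ
        + D * P + P * Dᵀ)).trace
      ≤ -lam * (Qᵀ * Q).trace
        + 2 * ‖D‖ * P.trace * Real.sqrt ((Qᵀ * Q).trace) := by
  have hQt : Qᵀ = Q := hQ
  set M : Matrix (Fin d) (Fin d) ℝ := p + P with hMdef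
  have hM : M.PosSemidef := hp.add hP
  have hMt : Mᵀ = M := psd_transpose hM
  have hPt : Pᵀ = P := psd_transpose hP
  open scoped MatrixOrder in
  set S : Matrix (Fin d) (Fin d) ℝ := CFC.sqrt P with hSdef
  have hSP : S * S = P := by
    open scoped MatrixOrder in exact CFC.sqrt_mul_sqrt_self P hP.nonneg
  have hSt : Sᵀ = S := psd_transpose (by open scoped MatrixOrder in exact (CFC.sqrt_nonneg P).posSemidef)
  set c : ℝ := ρ / 2 with hcdef
  have hc : 0 ≤ c := by positivity
  -- expansion of the trace
  have expand : (Qᵀ * ((B - c • M) * Q + Q * (B - c • M)ᵀ + D * P + P * Dᵀ)).trace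
      = (Qᵀ * (B * Q)).trace + (Qᵀ * (Q * Bᵀ)).trace
        - c * (Qᵀ * (M * Q)).trace - c * (Qᵀ * (Q * M)).trace
        + (Qᵀ * (D * P)).trace + (Qᵀ * (P * Dᵀ)).trace := by
    simp only [Matrix.transpose_sub, Matrix.transpose_smul, hMt, Matrix.sub_mul,
      Matrix.mul_sub, Matrix.mul_add, Matrix.smul_mul, Matrix.mul_smul,
      Matrix.trace_add, Matrix.trace_sub, Matrix.trace_smul, smul_eq_mul]
    ring
  rw [expand]
  -- the B-part
  have hTB2 : (Qᵀ * (Q * Bᵀ)).trace = (Qᵀ * (Bᵀ * Q)).trace := by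
    rw [hQt, ← Matrix.mul_assoc, ← Matrix.mul_assoc, Matrix.trace_mul_cycle Q Bᵀ Q]
  have hTB : (Qᵀ * (B * Q)).trace + (Qᵀ * (Q * Bᵀ)).trace ≤ -lam * (Qᵀ * Q).trace := by
    rw [hTB2]
    have : (Qᵀ * (B * Q)).trace + (Qᵀ * (Bᵀ * Q)).trace = (Qᵀ * ((B + Bᵀ) * Q)).trace := by
      rw [Matrix.add_mul, Matrix.mul_add, Matrix.trace_add]
    rw [this, trace_quad, trace_col]
    calc (∑ j, (fun i => Q i j) ⬝ᵥ ((B + Bᵀ) *ᵥ fun i => Q i j))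
        ≤ ∑ j, -lam * ((fun i => Q i j) ⬝ᵥ (fun i => Q i j)) :=
          Finset.sum_le_sum fun j _ => hB _
      _ = -lam * ∑ j, (fun i => Q i j) ⬝ᵥ (fun i => Q i j) := by rw [Finset.mul_sum]
  -- the M-part (nonnegative)
  have hquadM : ∀ (R : Matrix (Fin d) (Fin d) ℝ), R.PosSemidef →
      0 ≤ (Qᵀ * (R * Q)).trace := by
    intro R hR
    rw [trace_quad]
    exact Finset.sum_nonneg fun j _ => by simpa using hR.dotProduct_mulVec_nonneg (fun i => Q i j)
  have hTM1 : 0 ≤ (Qᵀ * (M * Q)).trace := hquadM M hM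
  have hTM2 : (Qᵀ * (Q * M)).trace = (Qᵀ * (M * Q)).trace := by
    rw [hQt, ← Matrix.mul_assoc, ← Matrix.mul_assoc, Matrix.trace_mul_cycle Q M Q]
  -- the D-part
  have hTD2 : (Qᵀ * (P * Dᵀ)).trace = (Qᵀ * (D * P)).trace := by
    have e1 : Qᵀ * (P * Dᵀ) = (D * (P * Q))ᵀ := by
      rw [Matrix.transpose_mul, Matrix.transpose_mul, hPt, hQt, Matrix.mul_assoc]
    rw [e1, Matrix.trace_transpose, hQt]
    rw [Matrix.trace_mul_comm D (P * Q), Matrix.mul_assoc, Matrix.trace_mul_comm P (Q * D),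
      Matrix.mul_assoc]
  have hDP : (Qᵀ * (D * P)).trace ≤ ‖D‖ * P.trace * Real.sqrt ((Qᵀ * Q).trace) := by
    have htP : P.trace = fr2 S := by
      rw [fr2_eq_trace, hSt, hSP]
    have hfr2Q : fr2 Q = (Qᵀ * Q).trace := fr2_eq_trace Q
    have key : (Qᵀ * (D * P)).trace = (S * (Q * (D * S))).trace := by
      rw [hQt, ← hSP]
      simp only [← Matrix.mul_assoc]
      rw [Matrix.trace_mul_comm (Q * D * S) S]
      simp only [← Matrix.mul_assoc]
    -- entrywise Cauchy-Schwarz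
    set T : Matrix (Fin d) (Fin d) ℝ := Q * (D * S) with hTdef
    have hentry : (S * T).trace = ∑ x : Fin d × Fin d, S x.2 x.1 * T x.2 x.1 := by
      have hs : ∀ a b, S a b = S b a := fun a b => by
        conv_lhs => rw [← hSt, Matrix.transpose_apply]
      rw [Fintype.sum_prod_type]
      simp only [Matrix.trace, Matrix.diag, Matrix.mul_apply, Finset.sum_congr]
      exact Finset.sum_congr rfl fun i _ => Finset.sum_congr rfl fun j _ => by rw [hs i j]
    have hcs : ((S * T).trace)^2 ≤ fr2 S * fr2 T := by
      rw [hentry]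
      have := Finset.sum_mul_sq_le_sq_mul_sq Finset.univ
        (fun x : Fin d × Fin d => S x.2 x.1) (fun x : Fin d × Fin d => T x.2 x.1)
      refine this.trans (le_of_eq ?_)
      congr 1
      · rw [fr2, Fintype.sum_prod_type]
        exact Finset.sum_comm
      · rw [fr2, Fintype.sum_prod_type]
        exact Finset.sum_comm
    have hT : fr2 T ≤ fr2 Q * (‖D‖^2 * fr2 S) := by
      calc fr2 T ≤ fr2 Q * fr2 (D * S) := fr2_mul_le Q (D * S)
        _ ≤ fr2 Q * (‖D‖^2 * fr2 S) :=
          mul_le_mul_of_nonneg_left (fr2_mul_le_op D S) (fr2_nonneg Q)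
    have hbound : (S * T).trace ≤ Real.sqrt (fr2 S) * Real.sqrt (fr2 T) := by
      have h1 : (S * T).trace ≤ |(S * T).trace| := le_abs_self _
      have h2 : |(S * T).trace| = Real.sqrt (((S * T).trace)^2) := (Real.sqrt_sq_eq_abs _).symm
      rw [h2] at h1
      refine h1.trans ?_
      rw [← Real.sqrt_mul (fr2_nonneg S)]
      exact Real.sqrt_le_sqrt hcs
    have hsqT : Real.sqrt (fr2 T) ≤ Real.sqrt (fr2 Q) * (‖D‖ * Real.sqrt (fr2 S)) := by
      have : Real.sqrt (fr2 T) ≤ Real.sqrt (fr2 Q * (‖D‖^2 * fr2 S)) := Real.sqrt_le_sqrt hT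
      refine this.trans (le_of_eq ?_)
      rw [Real.sqrt_mul (fr2_nonneg Q), Real.sqrt_mul (by positivity),
        Real.sqrt_sq (norm_nonneg D)]
    calc (Qᵀ * (D * P)).trace = (S * T).trace := key
      _ ≤ Real.sqrt (fr2 S) * Real.sqrt (fr2 T) := hbound
      _ ≤ Real.sqrt (fr2 S) * (Real.sqrt (fr2 Q) * (‖D‖ * Real.sqrt (fr2 S))) :=
          mul_le_mul_of_nonneg_left hsqT (Real.sqrt_nonneg _)
      _ = ‖D‖ * (Real.sqrt (fr2 S) * Real.sqrt (fr2 S)) * Real.sqrt (fr2 Q) := by ring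
      _ = ‖D‖ * P.trace * Real.sqrt ((Qᵀ * Q).trace) := by
          rw [Real.mul_self_sqrt (fr2_nonneg S), ← htP, hfr2Q]
  have hsqrt_nonneg : (0:ℝ) ≤ Real.sqrt ((Qᵀ * Q).trace) := Real.sqrt_nonneg _
  nlinarith [mul_nonneg hc hTM1, hTM2, hTD2, hDP, hTB]
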